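/- Let $\bar{n}, \bar{m} \in N_T^d$. If there exist $\gamma \in GL_d(\mathbb{F}_q[t])$ and $a \in F^{\times}$ such that $\gamma\, l_{\bar{n}} = a\, l_{\bar{m}}$ (equality of $\mathcal{O}$-submodules of $F^d$), then $\bar{n} = \bar{m}$. In other words, distinct tuples in $N_T^d$ give lattices lying in distinct orbits under the combined action of $GL_d(\mathbb{F}_q[t])$ and scaling by $F^{\times}$. -/

import Mathlib

open Matrix Polynomial

noncomputable section

/-- `t = X⁻¹` in the Laurent series field `F = 𝔽_q((X))`. -/
def tF (Fq : Type) [Field Fq] : LaurentSeries Fq := HahnSeries.single (-1 : ℤ) (1 : Fq)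

/-- The embedding of the polynomial ring `𝔽_q[t]` into `F = 𝔽_q((X))`, sending the
polynomial variable to `t = X⁻¹`. -/
def polyToF (Fq : Type) [Field Fq] : Polynomial Fq →+* LaurentSeries Fq :=
  Polynomial.eval₂RingHom (HahnSeries.C) (tF Fq)

/-- The lattice `l_n̄ = t^{n₁}𝒪e₁ ⊕ ⋯ ⊕ t^{n_d}𝒪e_d` as an `𝒪`-submodule of `F^d`,
where `𝒪 = 𝔽_q[[X]]` acts on `F = 𝔽_q((X))` via the inclusion, and
`t^{n} = HahnSeries.single (-n) 1`. -/
def lattM (Fq : Type) [Field Fq] {d : ℕ} (n : Fin d → ℤ) :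
    Submodule (PowerSeries Fq) (Fin d → LaurentSeries Fq) :=
  Submodule.span (PowerSeries Fq)
    (Set.range fun i : Fin d =>
      (HahnSeries.single (-(n i)) (1 : Fq) : LaurentSeries Fq) •
        (Pi.single i (1 : LaurentSeries Fq) : Fin d → LaurentSeries Fq))

/-- The image `g L` of an `𝒪`-submodule `L ⊆ F^d` under a matrix `g ∈ M_d(F)`. -/
def actM (Fq : Type) [Field Fq] {d : ℕ} (g : Matrix (Fin d) (Fin d) (LaurentSeries Fq))
    (L : Submodule (PowerSeries Fq) (Fin d → LaurentSeries Fq)) :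
    Submodule (PowerSeries Fq) (Fin d → LaurentSeries Fq) :=
  L.map ((g.mulVecLin).restrictScalars (PowerSeries Fq))

/-- The image `a L` of an `𝒪`-submodule `L ⊆ F^d` under scalar multiplication by `a ∈ F`. -/
def scaleM (Fq : Type) [Field Fq] {d : ℕ} (a : LaurentSeries Fq)
    (L : Submodule (PowerSeries Fq) (Fin d → LaurentSeries Fq)) :
    Submodule (PowerSeries Fq) (Fin d → LaurentSeries Fq) :=
  L.map ((LinearMap.lsmul (LaurentSeries Fq) (Fin d → LaurentSeries Fq) a).restrictScalars
    (PowerSeries Fq))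

/-- The image in `M_d(F)` of a matrix over `𝔽_q[t]`. -/
def glToF (Fq : Type) [Field Fq] {d : ℕ} (γ : GL (Fin d) (Polynomial Fq)) :
    Matrix (Fin d) (Fin d) (LaurentSeries Fq) :=
  (γ : Matrix (Fin d) (Fin d) (Polynomial Fq)).map (polyToF Fq)

/-- The stabilizer `S_n̄ = {γ ∈ GL_d(𝔽_q[t]) : γ l_n̄ = l_n̄}`. -/
def Stab (Fq : Type) [Field Fq] {d : ℕ} (n : Fin d → ℤ) :
    Set (GL (Fin d) (Polynomial Fq)) :=
  {γ | actM Fq (glToF Fq γ) (lattM Fq n) = lattM Fq n}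

/-- `N_T^d`: integer tuples `n₁ ≥ n₂ ≥ ⋯ ≥ n_d = 0`. -/
def NT {d : ℕ} (n : Fin d → ℤ) : Prop :=
  (∀ i j : Fin d, i ≤ j → n j ≤ n i) ∧ ∀ i : Fin d, (i : ℕ) = d - 1 → n i = 0

/-- The difference sequence `m_i = n_i - n_{i+1}`. -/
def mdiff {d : ℕ} (n : Fin d → ℤ) (i : ℕ) (h : i + 1 < d) : ℤ :=
  n ⟨i, Nat.lt_of_succ_lt h⟩ - n ⟨i + 1, h⟩

end

noncomputable section AuxLemmas

variable (Fq : Type) [Field Fq]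

/-- `x` lies in `single e 1 • 𝒪`, i.e. has support in `[e, ∞)`. -/
def MemShift (e : ℤ) (x : LaurentSeries Fq) : Prop :=
  ∃ c : PowerSeries Fq, x = HahnSeries.single e 1 * HahnSeries.ofPowerSeries ℤ Fq c

variable {Fq}

lemma ofPowerSeries_coeff_neg (c : PowerSeries Fq) {z : ℤ} (hz : z < 0) :
    (HahnSeries.ofPowerSeries ℤ Fq c).coeff z = 0 := by
  rw [HahnSeries.ofPowerSeries_apply, HahnSeries.embDomain_notin_range]
  rintro ⟨n, hn⟩
  simp only [Nat.castOrderEmbedding_apply] at hn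
  omega

lemma memShift_iff {e : ℤ} {x : LaurentSeries Fq} :
    MemShift Fq e x ↔ ∀ z : ℤ, z < e → x.coeff z = 0 := by
  constructor
  · rintro ⟨c, rfl⟩ z hz
    rw [← sub_add_cancel z e, HahnSeries.coeff_single_mul_add, one_mul,
      ofPowerSeries_coeff_neg _ (by omega)]
  · intro hx
    refine ⟨PowerSeries.mk fun n => x.coeff (e + n), ?_⟩
    ext z
    rw [← sub_add_cancel z e, HahnSeries.coeff_single_mul_add, one_mul]
    rcases le_or_gt e z with hle | hlt
    · have h0 : z - e = ((z - e).toNat : ℤ) := (Int.toNat_of_nonneg (by omega)).symm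
      rw [h0, HahnSeries.ofPowerSeries_apply_coeff, PowerSeries.coeff_mk]
      congr 1
      omega
    · rw [ofPowerSeries_coeff_neg _ (by omega), hx _ (by omega)]


open Polynomial in
lemma polyToF_monomial (j : ℕ) (a : Fq) :
    polyToF Fq (Polynomial.monomial j a) = HahnSeries.single (-(j:ℤ)) a := by
  rw [polyToF, Polynomial.coe_eval₂RingHom, Polynomial.eval₂_monomial, tF,
    HahnSeries.single_pow]
  rw [HahnSeries.C_apply, HahnSeries.single_mul_single]
  simp

lemma polyToF_coeff_neg (q : Polynomial Fq) (j : ℕ) :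
    (polyToF Fq q).coeff (-(j:ℤ)) = q.coeff j := by
  induction q using Polynomial.induction_on' with
  | add p q hp hq => simp [map_add, hp, hq]
  | monomial k a =>
    rw [polyToF_monomial, HahnSeries.coeff_single, Polynomial.coeff_monomial]
    have : (-(j:ℤ) = -(k:ℤ)) ↔ (k = j) := by omega
    simp only [this]

lemma polyToF_coeff_pos (q : Polynomial Fq) {z : ℤ} (hz : 0 < z) :
    (polyToF Fq q).coeff z = 0 := by
  induction q using Polynomial.induction_on' with
  | add p q hp hq => simp [map_add, hp, hq]
  | monomial k a =>
    rw [polyToF_monomial, HahnSeries.coeff_single_of_ne (by omega)]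

lemma polyToF_eq_zero {e : ℤ} (he : 0 < e) {q : Polynomial Fq}
    (hq : MemShift Fq e (polyToF Fq q)) : q = 0 := by
  rw [memShift_iff] at hq
  ext j
  rw [← polyToF_coeff_neg q j, hq _ (by omega), Polynomial.coeff_zero]

lemma memShift_zero (e : ℤ) : MemShift Fq e (0 : LaurentSeries Fq) :=
  memShift_iff.2 fun _ _ => rfl

lemma memShift_single (e : ℤ) : MemShift Fq e (HahnSeries.single e (1:Fq)) :=
  memShift_iff.2 fun z hz => HahnSeries.coeff_single_of_ne (by omega)

lemma mem_lattM_iff {d : ℕ} {n : Fin d → ℤ} {x : Fin d → LaurentSeries Fq} :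
    x ∈ lattM Fq n ↔ ∀ i, MemShift Fq (-(n i)) (x i) := by
  classical
  rw [lattM, Submodule.mem_span_range_iff_exists_fun]
  have key : ∀ (c : Fin d → PowerSeries Fq) (i : Fin d),
      (∑ j, c j • ((HahnSeries.single (-(n j)) (1:Fq) : LaurentSeries Fq) •
        (Pi.single j (1 : LaurentSeries Fq) : Fin d → LaurentSeries Fq))) i
      = HahnSeries.single (-(n i)) (1:Fq) * HahnSeries.ofPowerSeries ℤ Fq (c i) := by
    intro c i
    simp only [Finset.sum_apply, Pi.smul_apply, Pi.single_apply]
    rw [Finset.sum_eq_single i]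
    · rw [smul_eq_mul, if_pos rfl, mul_one, Algebra.smul_def, LaurentSeries.coe_algebraMap,
        mul_comm]
    · intro j _ hj
      simp only [if_neg (Ne.symm hj), smul_zero]
    · intro hi; exact absurd (Finset.mem_univ i) hi
  constructor
  · rintro ⟨c, rfl⟩ i
    exact ⟨c i, key c i⟩
  · intro hx
    choose c hc using hx
    exact ⟨c, funext fun i => by rw [key c i, ← hc i]⟩


lemma isUnit_powerSeriesPart {a : LaurentSeries Fq} (ha : a ≠ 0) :
    IsUnit a.powerSeriesPart := by
  rw [PowerSeries.isUnit_iff_constantCoeff]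
  have h0 : (PowerSeries.constantCoeff (R := Fq)) a.powerSeriesPart = a.coeff a.order := by
    rw [← PowerSeries.coeff_zero_eq_constantCoeff_apply, LaurentSeries.powerSeriesPart_coeff]
    norm_num
  rw [h0, isUnit_iff_ne_zero]
  exact fun h0' => ha (HahnSeries.coeff_order_eq_zero.1 h0')

lemma memShift_mul_iff {a : LaurentSeries Fq} (ha : a ≠ 0) (e : ℤ) (x : LaurentSeries Fq) :
    MemShift Fq (e + a.order) (a * x) ↔ MemShift Fq e x := by
  obtain ⟨u, hu⟩ := isUnit_powerSeriesPart ha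
  have ha' : a = HahnSeries.single a.order 1 * HahnSeries.ofPowerSeries ℤ Fq ↑u := by
    rw [hu]
    exact (LaurentSeries.single_order_mul_powerSeriesPart a).symm
  have hsingle : (HahnSeries.single (e + a.order) (1:Fq) : LaurentSeries Fq)
      = HahnSeries.single e 1 * HahnSeries.single a.order 1 := by
    rw [HahnSeries.single_mul_single, one_mul]
  have huu : (HahnSeries.ofPowerSeries ℤ Fq ↑u) * (HahnSeries.ofPowerSeries ℤ Fq ↑u⁻¹)
      = (1 : LaurentSeries Fq) := by
    rw [← _root_.map_mul, Units.mul_inv, _root_.map_one]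
  constructor
  · rintro ⟨c, hc⟩
    refine ⟨(↑u⁻¹ : PowerSeries Fq) * c, ?_⟩
    apply mul_left_cancel₀ ha
    rw [hc, hsingle, _root_.map_mul]
    linear_combination (-((HahnSeries.single e (1:Fq) : LaurentSeries Fq) *
        HahnSeries.ofPowerSeries ℤ Fq ↑u⁻¹ * HahnSeries.ofPowerSeries ℤ Fq c)) * ha' +
      (-((HahnSeries.single a.order (1:Fq) : LaurentSeries Fq) * HahnSeries.single e 1 *
        HahnSeries.ofPowerSeries ℤ Fq c)) * huu
  · rintro ⟨c, rfl⟩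
    refine ⟨(↑u : PowerSeries Fq) * c, ?_⟩
    rw [hsingle, _root_.map_mul]
    linear_combination ((HahnSeries.single e (1:Fq) : LaurentSeries Fq) *
      HahnSeries.ofPowerSeries ℤ Fq c) * ha'

lemma scaleM_lattM {d : ℕ} {a : LaurentSeries Fq} (ha : a ≠ 0) (mm : Fin d → ℤ) :
    scaleM Fq a (lattM Fq mm) = lattM Fq (fun i => mm i - a.order) := by
  ext x
  rw [scaleM, Submodule.mem_map]
  constructor
  · rintro ⟨y, hy, rfl⟩
    rw [mem_lattM_iff] at hy ⊢
    intro i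
    have happ : ((LinearMap.lsmul (LaurentSeries Fq) (Fin d → LaurentSeries Fq) a).restrictScalars
        (PowerSeries Fq) y) i = a * y i := rfl
    rw [happ]
    have := (memShift_mul_iff ha (-(mm i)) (y i)).2 (hy i)
    have harith : -(mm i) + a.order = -(mm i - a.order) := by ring
    rwa [harith] at this
  · intro hx
    rw [mem_lattM_iff] at hx
    refine ⟨a⁻¹ • x, ?_, ?_⟩
    · rw [mem_lattM_iff]
      intro i
      apply (memShift_mul_iff ha (-(mm i)) _).1
      have happ : a * (a⁻¹ • x) i = x i := by
        simp only [Pi.smul_apply, smul_eq_mul, ← mul_assoc, mul_inv_cancel₀ ha, one_mul]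
      rw [happ]
      have harith : -(mm i) + a.order = -(mm i - a.order) := by ring
      rw [harith]
      exact hx i
    · show a • (a⁻¹ • x) = x
      funext i
      show a * (a⁻¹ * x i) = x i
      rw [← mul_assoc, mul_inv_cancel₀ ha, one_mul]

lemma actM_actM {d : ℕ} (g1 g2 : Matrix (Fin d) (Fin d) (LaurentSeries Fq))
    (L : Submodule (PowerSeries Fq) (Fin d → LaurentSeries Fq)) :
    actM Fq g1 (actM Fq g2 L) = actM Fq (g1 * g2) L := by
  rw [actM, actM, actM, ← Submodule.map_comp]
  congr 1
  refine LinearMap.ext fun x => ?_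
  show g1 *ᵥ (g2 *ᵥ x) = (g1 * g2) *ᵥ x
  rw [Matrix.mulVec_mulVec]

lemma actM_one {d : ℕ} (L : Submodule (PowerSeries Fq) (Fin d → LaurentSeries Fq)) :
    actM Fq (1 : Matrix (Fin d) (Fin d) (LaurentSeries Fq)) L = L := by
  have : ((1 : Matrix (Fin d) (Fin d) (LaurentSeries Fq)).mulVecLin).restrictScalars
      (PowerSeries Fq) = LinearMap.id := by
    refine LinearMap.ext fun x => ?_
    show (1 : Matrix (Fin d) (Fin d) (LaurentSeries Fq)) *ᵥ x = x
    rw [Matrix.one_mulVec]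
  rw [actM, this, Submodule.map_id]

lemma glToF_inv_mul {d : ℕ} (γ : GL (Fin d) (Polynomial Fq)) :
    glToF Fq γ⁻¹ * glToF Fq γ = 1 := by
  rw [glToF, glToF, ← Matrix.map_mul]
  have hγ : ((γ⁻¹ : GL (Fin d) (Polynomial Fq)) : Matrix (Fin d) (Fin d) (Polynomial Fq)) *
      (γ : Matrix (Fin d) (Fin d) (Polynomial Fq)) = 1 := γ.inv_mul
  rw [hγ, Matrix.map_one _ (map_zero _) (map_one _)]


open Matrix in
lemma card_le_of_act {d : ℕ} (γ : GL (Fin d) (Polynomial Fq)) (n p : Fin d → ℤ)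
    (h : actM Fq (glToF Fq γ) (lattM Fq n) = lattM Fq p) :
    (Finset.univ.filter fun i : Fin d => 0 ≤ n i).card ≤
      (Finset.univ.filter fun i : Fin d => 0 ≤ p i).card := by
  classical
  set S := Finset.univ.filter fun i : Fin d => 0 ≤ n i with hS
  set T := Finset.univ.filter fun i : Fin d => 0 ≤ p i with hT
  set w : S → (Fin d → Polynomial Fq) :=
    fun i => Pi.single i.1 (Polynomial.X ^ (n i.1).toNat) with hwdef
  set u : S → (Fin d → Polynomial Fq) :=
    fun i => (γ : Matrix (Fin d) (Fin d) (Polynomial Fq)) *ᵥ w i with hudef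
  -- w is linearly independent
  have hw_indep : LinearIndependent (Polynomial Fq) w := by
    rw [linearIndependent_iff']
    intro s g hsum i hi
    have hcoord := congrFun hsum i.1
    simp only [Finset.sum_apply, Pi.smul_apply, hwdef, Pi.single_apply, Pi.zero_apply] at hcoord
    rw [Finset.sum_eq_single i] at hcoord
    · rw [if_pos rfl, smul_eq_mul] at hcoord
      exact (mul_eq_zero.1 hcoord).resolve_right (pow_ne_zero _ Polynomial.X_ne_zero)
    · intro j _ hj
      rw [if_neg (fun hc => hj (Subtype.ext hc.symm)), smul_zero]
    · intro hi'; exact absurd hi hi'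
  -- u is linearly independent
  have hinj : Function.Injective
      ((γ : Matrix (Fin d) (Fin d) (Polynomial Fq)).mulVecLin) := by
    intro x y hxy
    have h2 := congrArg (fun z => ((γ⁻¹ : GL (Fin d) (Polynomial Fq)) :
      Matrix (Fin d) (Fin d) (Polynomial Fq)) *ᵥ z) hxy
    simpa [Matrix.mulVecLin_apply, Matrix.mulVec_mulVec, γ.inv_mul, Matrix.one_mulVec] using h2
  have hu_indep : LinearIndependent (Polynomial Fq)
      (((γ : Matrix (Fin d) (Fin d) (Polynomial Fq)).mulVecLin) ∘ w) :=
    hw_indep.map' _ (LinearMap.ker_eq_bot.2 hinj)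
  have hcomp : ((γ : Matrix (Fin d) (Fin d) (Polynomial Fq)).mulVecLin) ∘ w = u := by
    funext i
    exact Matrix.mulVecLin_apply _ _
  rw [hcomp] at hu_indep
  -- the image vectors lie in lattM p
  have hmem : ∀ i : S, (fun j => polyToF Fq (u i j)) ∈ lattM Fq p := by
    intro i
    rw [← h, actM, Submodule.mem_map]
    refine ⟨fun j => polyToF Fq (w i j), ?_, ?_⟩
    · rw [mem_lattM_iff]
      intro j
      by_cases hj : j = i.1
      · have h0 : 0 ≤ n i.1 := (Finset.mem_filter.1 i.2).2
        have hwj : w i j = Polynomial.X ^ (n i.1).toNat := by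
          rw [hwdef, hj]; exact Pi.single_eq_same _ _
        rw [hwj, Polynomial.X_pow_eq_monomial, polyToF_monomial, hj]
        have harr : -((((n i.1).toNat : ℕ)) : ℤ) = -(n i.1) := by
          rw [Int.toNat_of_nonneg h0]
        rw [harr]
        exact memShift_single _
      · have hwj : w i j = 0 := by
          rw [hwdef]; exact Pi.single_eq_of_ne hj _
        rw [hwj, map_zero]
        exact memShift_zero _
    · funext j
      show (glToF Fq γ *ᵥ fun k => polyToF Fq (w i k)) j = polyToF Fq (u i j)
      rw [hudef]
      simp [Matrix.mulVec, dotProduct, glToF, Matrix.map_apply, map_sum, _root_.map_mul]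
  -- coordinates outside T vanish
  have huT : ∀ (i : S) (j : Fin d), j ∉ T → u i j = 0 := by
    intro i j hj
    have hj' : ¬ (0 ≤ p j) := fun hc => hj (Finset.mem_filter.2 ⟨Finset.mem_univ j, hc⟩)
    have hpj : 0 < -(p j) := by omega
    have := (mem_lattM_iff.1 (hmem i)) j
    exact polyToF_eq_zero hpj this
  -- the span of the coordinate vectors indexed by T
  set V := Submodule.span (Polynomial Fq)
    (Set.range fun j : T => (Pi.single j.1 (1 : Polynomial Fq) : Fin d → Polynomial Fq)) with hV
  have hVmem : ∀ i : S, u i ∈ V := by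
    intro i
    have hrepr : u i = ∑ j : Fin d, Pi.single j (u i j) := (Finset.univ_sum_single (u i)).symm
    rw [hrepr]
    refine Submodule.sum_mem _ fun j _ => ?_
    by_cases hj : j ∈ T
    · have : Pi.single j (u i j) = (u i j) •
          ((Pi.single j (1 : Polynomial Fq)) : Fin d → Polynomial Fq) := by
        rw [← Pi.single_smul, smul_eq_mul, mul_one]
      rw [this]
      exact Submodule.smul_mem _ _ (Submodule.subset_span ⟨⟨j, hj⟩, rfl⟩)
    · rw [huT i j hj, Pi.single_zero]
      exact Submodule.zero_mem _
  have hfin : Module.Finite (Polynomial Fq) V :=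
    Module.Finite.span_of_finite _ (Set.finite_range _)
  have hb_indep : LinearIndependent (Polynomial Fq)
      (fun j : T => (Pi.single j.1 (1 : Polynomial Fq) : Fin d → Polynomial Fq)) := by
    have hbasis := (Pi.basisFun (Polynomial Fq) (Fin d)).linearIndependent
    have := hbasis.comp (fun j : T => j.1) Subtype.val_injective
    simpa [Function.comp_def, Pi.basisFun_apply] using this
  have hrank : Module.finrank (Polynomial Fq) V = T.card := by
    rw [hV, finrank_span_eq_card hb_indep, Fintype.card_coe]
  set u' : S → V := fun i => ⟨u i, hVmem i⟩ with hu'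
  have hu'_indep : LinearIndependent (Polynomial Fq) u' := by
    apply LinearIndependent.of_comp V.subtype
    exact hu_indep
  have := hu'_indep.fintype_card_le_finrank
  rwa [Fintype.card_coe, hrank] at this


lemma scaleM_actM {d : ℕ} (a : LaurentSeries Fq) (g : Matrix (Fin d) (Fin d) (LaurentSeries Fq))
    (L : Submodule (PowerSeries Fq) (Fin d → LaurentSeries Fq)) :
    scaleM Fq a (actM Fq g L) = actM Fq g (scaleM Fq a L) := by
  rw [scaleM, actM, actM, scaleM, ← Submodule.map_comp, ← Submodule.map_comp]
  congr 1
  refine LinearMap.ext fun x => ?_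
  show a • (g *ᵥ x) = g *ᵥ (a • x)
  funext j
  show a * (g *ᵥ x) j = (g *ᵥ (a • x)) j
  simp only [Matrix.mulVec, dotProduct, Pi.smul_apply, smul_eq_mul, Finset.mul_sum]
  exact Finset.sum_congr rfl fun c _ => by ring

lemma act_shift {d : ℕ} (γ : GL (Fin d) (Polynomial Fq)) (n p : Fin d → ℤ)
    (h : actM Fq (glToF Fq γ) (lattM Fq n) = lattM Fq p) (k : ℤ) :
    actM Fq (glToF Fq γ) (lattM Fq (fun i => n i + k)) = lattM Fq (fun i => p i + k) := by
  have hs : (HahnSeries.single (-k) (1:Fq) : LaurentSeries Fq) ≠ 0 :=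
    HahnSeries.single_ne_zero one_ne_zero
  have ho : (HahnSeries.single (-k) (1:Fq) : LaurentSeries Fq).order = -k :=
    HahnSeries.order_single one_ne_zero
  have h1 : lattM Fq (fun i => n i + k)
      = scaleM Fq (HahnSeries.single (-k) (1:Fq)) (lattM Fq n) := by
    rw [scaleM_lattM hs, ho]
    congr 1
    funext i
    ring
  have h2 : lattM Fq (fun i => p i + k)
      = scaleM Fq (HahnSeries.single (-k) (1:Fq)) (lattM Fq p) := by
    rw [scaleM_lattM hs, ho]
    congr 1
    funext i
    ring
  rw [h1, h2, ← scaleM_actM, h]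

lemma act_inv {d : ℕ} (γ : GL (Fin d) (Polynomial Fq)) (n p : Fin d → ℤ)
    (h : actM Fq (glToF Fq γ) (lattM Fq n) = lattM Fq p) :
    actM Fq (glToF Fq γ⁻¹) (lattM Fq p) = lattM Fq n := by
  rw [← h, actM_actM, glToF_inv_mul, actM_one]

lemma card_eq_of_act {d : ℕ} (γ : GL (Fin d) (Polynomial Fq)) (n p : Fin d → ℤ)
    (h : actM Fq (glToF Fq γ) (lattM Fq n) = lattM Fq p) :
    (Finset.univ.filter fun i : Fin d => 0 ≤ n i).card =
      (Finset.univ.filter fun i : Fin d => 0 ≤ p i).card :=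
  le_antisymm (card_le_of_act γ n p h) (card_le_of_act γ⁻¹ p n (act_inv γ n p h))

lemma not_lt_aux {d : ℕ} (n p : Fin d → ℤ)
    (hn : ∀ i j : Fin d, i ≤ j → n j ≤ n i) (hp : ∀ i j : Fin d, i ≤ j → p j ≤ p i)
    (hc : ∀ k : ℤ, (Finset.univ.filter fun i : Fin d => 0 ≤ n i + k).card =
      (Finset.univ.filter fun i : Fin d => 0 ≤ p i + k).card)
    (i : Fin d) : ¬ (n i < p i) := by
  classical
  intro hlt
  have h1 : Finset.Iic i ⊆ Finset.univ.filter fun l : Fin d => 0 ≤ p l + (-(p i)) := by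
    intro l hl
    rw [Finset.mem_Iic] at hl
    exact Finset.mem_filter.2 ⟨Finset.mem_univ _, by have := hp l i hl; omega⟩
  have h2 : (Finset.univ.filter fun l : Fin d => 0 ≤ n l + (-(p i))) ⊆ Finset.Iio i := by
    intro l hl
    have hml := (Finset.mem_filter.1 hl).2
    rw [Finset.mem_Iio]
    by_contra hc'
    push_neg at hc'
    have := hn i l hc'
    omega
  have hcard1 := Finset.card_le_card h1
  have hcard2 := Finset.card_le_card h2
  rw [← hc (-(p i))] at hcard1
  have h4 : (Finset.Iic i).card = (Finset.Iio i).card + 1 := by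
    rw [← Finset.Iio_insert i, Finset.card_insert_of_notMem (by simp)]
  omega

lemma eq_of_counting {d : ℕ} (n p : Fin d → ℤ)
    (hn : ∀ i j : Fin d, i ≤ j → n j ≤ n i) (hp : ∀ i j : Fin d, i ≤ j → p j ≤ p i)
    (hc : ∀ k : ℤ, (Finset.univ.filter fun i : Fin d => 0 ≤ n i + k).card =
      (Finset.univ.filter fun i : Fin d => 0 ≤ p i + k).card) :
    n = p := by
  funext i
  have hnot1 := not_lt_aux n p hn hp hc i
  have hnot2 := not_lt_aux p n hp hn (fun k => (hc k).symm) i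
  omega

end AuxLemmas

open Matrix Polynomial in
/-- distinct tuples in `N_T^d` give lattices in distinct orbits: if
`γ l_n̄ = a l_m̄` for some `γ ∈ GL_d(𝔽_q[t])` and `a ∈ F^×`, then `n̄ = m̄`. -/
theorem fundamental_domain_disjointness (Fq : Type) [Field Fq] [Fintype Fq]
    (d : ℕ) (hd : 2 ≤ d) (n m : Fin d → ℤ) (hn : NT n) (hm : NT m)
    (γ : GL (Fin d) (Polynomial Fq)) (a : LaurentSeries Fq) (ha : a ≠ 0)
    (h : actM Fq (glToF Fq γ) (lattM Fq n) = scaleM Fq a (lattM Fq m)) :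
    n = m := by
  classical
  obtain ⟨hn1, hn2⟩ := hn
  obtain ⟨hm1, hm2⟩ := hm
  have hP : actM Fq (glToF Fq γ) (lattM Fq n) = lattM Fq (fun i => m i - a.order) := by
    rw [h, scaleM_lattM ha]
  have hcount : ∀ k : ℤ, (Finset.univ.filter fun i : Fin d => 0 ≤ n i + k).card =
      (Finset.univ.filter fun i : Fin d => 0 ≤ (m i - a.order) + k).card := fun k =>
    card_eq_of_act γ _ _ (act_shift γ _ _ hP k)
  have hnp : n = fun i => m i - a.order :=
    eq_of_counting _ _ hn1 (fun i j hij => by have := hm1 i j hij; omega) hcount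
  have hd0 : d - 1 < d := by omega
  have h1 : n ⟨d - 1, hd0⟩ = 0 := hn2 ⟨d - 1, hd0⟩ rfl
  have h2 : m ⟨d - 1, hd0⟩ = 0 := hm2 ⟨d - 1, hd0⟩ rfl
  have h3 := congrFun hnp ⟨d - 1, hd0⟩
  simp only [h1, h2] at h3
  have ho : a.order = 0 := by omega
  funext i
  have := congrFun hnp i
  rw [ho] at this
  omega
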